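/- For every integer n ≥ 2, setting d := 2n, the numerical semigroup Γ generated by n and 4n − 1 satisfies the semigroup distribution property for d: for every integer l ≥ 1 the half-open interval ((l − 1)d, ld] contains exactly min(l + 1, d) elements of Γ. -/
import Mathlib


/-- `Γ` satisfies the semigroup distribution property for `d`: for every
`l ≥ 1` the half-open interval `((l−1)d, ld]` contains exactly
`min (l+1) d` elements of `Γ`. -/
def SemigroupDistributionProperty (Γ : Set ℕ) (d : ℕ) : Prop :=
  ∀ l : ℕ, 1 ≤ l →
    {k : ℕ | k ∈ Γ ∧ (l - 1) * d < k ∧ k ≤ l * d}.ncard = min (l + 1) d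

/-- Case (b) of the classification: for `d = 2n` even, the semigroup
`⟨d/2, 2d−1⟩ = ⟨n, 4n−1⟩` satisfies the semigroup distribution property
for `d`. -/
theorem distribution_property_case_b (n : ℕ) (hn : 2 ≤ n) :
    SemigroupDistributionProperty
      {m : ℕ | ∃ x y : ℕ, m = x * n + y * (4 * n - 1)} (2 * n) := by
  intro l hl
  obtain ⟨l, rfl⟩ : ∃ l', l = l' + 1 := ⟨l - 1, by omega⟩
  have h41 : 4 * n - 1 + 1 = 4 * n := by omega
  -- useful ring facts (to let omega treat `l * n` as a single atom)
  have e1 : (l + 1) * (2 * n) = 2 * (l * n) + 2 * n := by ring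
  have e2 : (l + 1 - 1) * (2 * n) = 2 * (l * n) := by
    simp only [Nat.add_sub_cancel]; ring
  have e4 : (2 * l + 1) * n = 2 * (l * n) + n := by ring
  have e5 : (2 * l + 2) * n = 2 * (l * n) + 2 * n := by ring
  set c1 := min n ((l + 1) / 2 + 1) with hc1
  set c2 := min n ((2 * l + 1) / 4 + 1) with hc2
  set F : Finset ℕ :=
    ((Finset.range c1).image (fun i => (2 * l + 2) * n - i)) ∪
    ((Finset.range c2).image (fun i => (2 * l + 1) * n - i)) with hF
  have hset : {k : ℕ | k ∈ {m : ℕ | ∃ x y : ℕ, m = x * n + y * (4 * n - 1)} ∧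
      (l + 1 - 1) * (2 * n) < k ∧ k ≤ (l + 1) * (2 * n)} = ↑F := by
    ext m
    simp only [Set.mem_setOf_eq, hF, Finset.coe_union, Set.mem_union, Finset.coe_image,
      Set.mem_image, Finset.mem_coe, Finset.mem_range]
    constructor
    · rintro ⟨⟨x, y, rfl⟩, h1, h2⟩
      set m := x * n + y * (4 * n - 1) with hm
      set y' := y % n with hy'
      have hy'n : y' < n := Nat.mod_lt _ (by omega)
      set X := x + (y / n) * (4 * n - 1) with hX
      have hm' : m = X * n + y' * (4 * n - 1) := by
        calc m = x * n + (n * (y / n) + y % n) * (4 * n - 1) := by rw [Nat.div_add_mod]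
          _ = (x + (y / n) * (4 * n - 1)) * n + (y % n) * (4 * n - 1) := by ring
      have ha : (X + 4 * y') * n = m + y' := by
        calc (X + 4 * y') * n = X * n + y' * (4 * n) := by ring
          _ = X * n + y' * (4 * n - 1 + 1) := by rw [h41]
          _ = X * n + y' * (4 * n - 1) + y' := by ring
          _ = m + y' := by rw [← hm']
      -- bound the coefficient a := X + 4 * y'
      have e6 : (X + 4 * y') * n = X * n + 4 * (y' * n) := by ring
      have hub : X + 4 * y' ≤ 2 * l + 2 := by
        by_contra hcon
        have : (2 * l + 3) * n ≤ (X + 4 * y') * n :=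
          Nat.mul_le_mul_right n (by omega)
        have e7 : (2 * l + 3) * n = 2 * (l * n) + 3 * n := by ring
        omega
      have hlb : 2 * l + 1 ≤ X + 4 * y' := by
        by_contra hcon
        have : (X + 4 * y') * n ≤ (2 * l) * n :=
          Nat.mul_le_mul_right n (by omega)
        have e8 : (2 * l) * n = 2 * (l * n) := by ring
        omega
      rcases (by omega : X + 4 * y' = 2 * l + 2 ∨ X + 4 * y' = 2 * l + 1) with hA | hA
      · left
        refine ⟨y', ?_, ?_⟩
        · omega
        · rw [hA] at ha; omega
      · right
        refine ⟨y', ?_, ?_⟩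
        · omega
        · rw [hA] at ha; omega
    · rintro (⟨i, hi, rfl⟩ | ⟨i, hi, rfl⟩)
      · have h4i : 4 * i ≤ 2 * l + 2 := by omega
        have hin : i < n := by omega
        refine ⟨⟨2 * l + 2 - 4 * i, i, ?_⟩, ?_, ?_⟩
        · have key : (2 * l + 2 - 4 * i) * n + i * (4 * n - 1) + i = (2 * l + 2) * n := by
            calc (2 * l + 2 - 4 * i) * n + i * (4 * n - 1) + i
                = (2 * l + 2 - 4 * i) * n + i * (4 * n - 1 + 1) := by ring
              _ = (2 * l + 2 - 4 * i) * n + i * (4 * n) := by rw [h41]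
              _ = (2 * l + 2 - 4 * i + 4 * i) * n := by ring
              _ = (2 * l + 2) * n := by rw [Nat.sub_add_cancel h4i]
          omega
        · omega
        · omega
      · have h4i : 4 * i ≤ 2 * l + 1 := by omega
        have hin : i < n := by omega
        refine ⟨⟨2 * l + 1 - 4 * i, i, ?_⟩, ?_, ?_⟩
        · have key : (2 * l + 1 - 4 * i) * n + i * (4 * n - 1) + i = (2 * l + 1) * n := by
            calc (2 * l + 1 - 4 * i) * n + i * (4 * n - 1) + i
                = (2 * l + 1 - 4 * i) * n + i * (4 * n - 1 + 1) := by ring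
              _ = (2 * l + 1 - 4 * i) * n + i * (4 * n) := by rw [h41]
              _ = (2 * l + 1 - 4 * i + 4 * i) * n := by ring
              _ = (2 * l + 1) * n := by rw [Nat.sub_add_cancel h4i]
          omega
        · omega
        · omega
  rw [hset, Set.ncard_coe_finset]
  have hdisj : Disjoint ((Finset.range c1).image (fun i => (2 * l + 2) * n - i))
      ((Finset.range c2).image (fun i => (2 * l + 1) * n - i)) := by
    rw [Finset.disjoint_left]
    rintro a ha hb
    simp only [Finset.mem_image, Finset.mem_range] at ha hb
    obtain ⟨i, hi, rfl⟩ := ha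
    obtain ⟨j, hj, hj'⟩ := hb
    omega
  have hinj1 : Set.InjOn (fun i => (2 * l + 2) * n - i) (Finset.range c1) := by
    intro i hi j hj hij
    simp only [Finset.coe_range, Set.mem_Iio] at hi hj
    simp only at hij
    omega
  have hinj2 : Set.InjOn (fun i => (2 * l + 1) * n - i) (Finset.range c2) := by
    intro i hi j hj hij
    simp only [Finset.coe_range, Set.mem_Iio] at hi hj
    simp only at hij
    omega
  rw [hF, Finset.card_union_of_disjoint hdisj, Finset.card_image_of_injOn hinj1,
    Finset.card_image_of_injOn hinj2, Finset.card_range, Finset.card_range]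
  omega
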